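/- arXiv:2512.10472 — 2 statements merged into one kernel-verified Lean document; each statement's English description precedes it below -/
import Mathlib

section
/- Let L be a finite label set and oc ⊆ L × L, and let G_oc be the well-formed-string grammar over (L, oc). Assume that no label of L is both an opener and a closer. Then no nonempty word generated by G_oc begins with a closer, and no nonempty word generated by G_oc ends with an opener. -/
/-- The well-formed-string grammar `G_oc` over a finite label set `L` with opening/closing
relation `oc ⊆ L × L` (Definition 5.1): single nonterminal `S`, productions `S → ε`,
`S → αS` for every neutral label `α` (occurring neither as an opener nor as a closer in `oc`),
and `S → ψSψ'` for every `(ψ, ψ') ∈ oc`. -/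
noncomputable def wfGrammar (L : Type) [Fintype L] [DecidableEq L] (oc : Finset (L × L)) :
    ContextFreeGrammar L where
  NT := Unit
  initial := ()
  rules := by
    classical
    exact
      {(⟨(), []⟩ : ContextFreeRule L Unit)} ∪
      ((Finset.univ.filter fun α : L => (∀ β, (α, β) ∉ oc) ∧ (∀ β, (β, α) ∉ oc)).image
        fun α => (⟨(), [Symbol.terminal α, Symbol.nonterminal ()]⟩ : ContextFreeRule L Unit)) ∪
      (oc.image fun p =>
        (⟨(), [Symbol.terminal p.1, Symbol.nonterminal (), Symbol.terminal p.2]⟩ :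
          ContextFreeRule L Unit))

private lemma not_mem_image_snd {L : Type} [DecidableEq L] {oc : Finset (L × L)} {a : L}
    (h : ∀ β, (β, a) ∉ oc) : a ∉ oc.image Prod.snd := by
  intro hmem
  obtain ⟨p, hp, hpa⟩ := Finset.mem_image.mp hmem
  exact h p.1 (by rwa [show p = (p.1, a) by rw [← hpa]] at hp)

private lemma not_mem_image_fst {L : Type} [DecidableEq L] {oc : Finset (L × L)} {a : L}
    (h : ∀ β, (a, β) ∉ oc) : a ∉ oc.image Prod.fst := by
  intro hmem
  obtain ⟨p, hp, hpa⟩ := Finset.mem_image.mp hmem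
  exact h p.2 (by rwa [show p = (a, p.2) by rw [← hpa]] at hp)

private lemma decomp_unique {L : Type} (x : List L) :
    ∀ (p : List (Symbol L Unit)) {y : List L} {q : List (Symbol L Unit)},
    x.map Symbol.terminal ++ Symbol.nonterminal () :: y.map Symbol.terminal
      = p ++ Symbol.nonterminal () :: q →
    p = x.map Symbol.terminal ∧ q = y.map Symbol.terminal := by
  induction x with
  | nil =>
    intro p y q h
    cases p with
    | nil =>
      refine ⟨rfl, ?_⟩
      have h' : (List.map Symbol.terminal y : List (Symbol L Unit)) = q := by simpa using h
      exact h'.symm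
    | cons s p =>
      simp only [List.map_nil, List.nil_append, List.cons_append, List.cons.injEq] at h
      exfalso
      have hmem : Symbol.nonterminal () ∈ (y.map Symbol.terminal : List (Symbol L Unit)) := by
        rw [h.2]; simp
      simp at hmem
  | cons c x ih =>
    intro p y q h
    cases p with
    | nil =>
      simp only [List.map_cons, List.cons_append, List.nil_append, List.cons.injEq] at h
      exact absurd h.1 (by simp)
    | cons s p =>
      simp only [List.map_cons, List.cons_append, List.cons.injEq] at h
      obtain ⟨rfl, h2⟩ := h
      obtain ⟨hp, hq⟩ := ih p h2
      exact ⟨by rw [hp]; rfl, hq⟩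

/-- If no label is both an opener and a closer, then no nonempty word generated by `G_oc`
begins with a closer, and no nonempty word generated by `G_oc` ends with an opener. -/
theorem stmt_6 {L : Type} [Fintype L] [DecidableEq L] (oc : Finset (L × L))
    (hdisj : ∀ a : L, a ∈ oc.image Prod.fst → a ∉ oc.image Prod.snd)
    (w : List L) (hw : w ∈ (wfGrammar L oc).language) :
    (∀ (a : L) (v : List L), w = a :: v → a ∉ oc.image Prod.snd) ∧
    (∀ (v : List L) (a : L), w = v ++ [a] → a ∉ oc.image Prod.fst) := by
  classical
  rw [ContextFreeGrammar.mem_language_iff] at hw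
  suffices h : ∃ x y : List L,
      ((∀ a, (x ++ y).head? = some a → a ∉ oc.image Prod.snd) ∧
       (∀ a, (x ++ y).getLast? = some a → a ∉ oc.image Prod.fst)) ∧
      (w.map Symbol.terminal
          = x.map Symbol.terminal ++ Symbol.nonterminal () :: y.map Symbol.terminal ∨
       w.map Symbol.terminal = ((x ++ y).map Symbol.terminal : List (Symbol L Unit))) by
    obtain ⟨x, y, ⟨hh, hl⟩, hu⟩ := h
    have hxy : w = x ++ y := by
      rcases hu with hu | hu
      · exfalso
        have hmem : Symbol.nonterminal () ∈ (w.map Symbol.terminal : List (Symbol L Unit)) := by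
          rw [hu]; simp
        simp at hmem
      · exact List.map_injective_iff.mpr (fun a b hab => by injection hab) hu
    constructor
    · intro a v hav
      apply hh
      rw [← hxy, hav]; rfl
    · intro v a hav
      apply hl
      rw [← hxy, hav, List.getLast?_concat]
  change (wfGrammar L oc).Derives [Symbol.nonterminal ()] (w.map Symbol.terminal : List (Symbol L Unit)) at hw
  generalize hgen : (w.map Symbol.terminal : List (Symbol L Unit)) = u at hw
  clear hgen
  induction hw with
  | refl => exact ⟨[], [], ⟨by simp, by simp⟩, Or.inl rfl⟩
  | tail _ hstep ih =>
    obtain ⟨x, y, ⟨hh, hl⟩, hu⟩ := ih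
    change ∃ r : ContextFreeRule L Unit, r ∈ (wfGrammar L oc).rules ∧ r.Rewrites _ _ at hstep
    obtain ⟨r, hr, hrw⟩ := hstep
    rw [ContextFreeRule.rewrites_iff] at hrw
    obtain ⟨p, q, hbc, rfl⟩ := hrw
    have hin : Symbol.nonterminal r.input = (Symbol.nonterminal () : Symbol L Unit) := rfl
    rw [hin] at hbc
    rcases hu with hu | hu
    · rw [hu, List.append_assoc, List.singleton_append] at hbc
      obtain ⟨rfl, rfl⟩ := decomp_unique x p hbc
      have hr' : r = (⟨(), []⟩ : ContextFreeRule L Unit) ∨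
          (∃ α : L, ((∀ β, (α, β) ∉ oc) ∧ (∀ β, (β, α) ∉ oc)) ∧
            r = ⟨(), [Symbol.terminal α, Symbol.nonterminal ()]⟩) ∨
          (∃ ψ ψ' : L, (ψ, ψ') ∈ oc ∧
            r = ⟨(), [Symbol.terminal ψ, Symbol.nonterminal (), Symbol.terminal ψ']⟩) := by
        change r ∈ (id (wfGrammar L oc).rules : Finset (ContextFreeRule L Unit)) at hr
        simp only [id_eq, wfGrammar, Finset.mem_union, Finset.mem_image, Finset.mem_filter,
          Finset.mem_singleton, Finset.mem_univ, true_and] at hr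
        rcases hr with (hr | ⟨α, hα, hrα⟩) | ⟨⟨ψ, ψ'⟩, hoc, hrp⟩
        · exact Or.inl hr
        · exact Or.inr (Or.inl ⟨α, hα, hrα.symm⟩)
        · exact Or.inr (Or.inr ⟨ψ, ψ', hoc, hrp.symm⟩)
      rcases hr' with rfl | ⟨α, ⟨hα1, hα2⟩, rfl⟩ | ⟨ψ, ψ', hoc, rfl⟩
      · exact ⟨x, y, ⟨hh, hl⟩, Or.inr (by simp)⟩
      · refine ⟨x ++ [α], y, ⟨?_, ?_⟩, Or.inl (by simp)⟩
        · intro a ha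
          rcases x with _ | ⟨c, x⟩
          · simp only [List.nil_append, List.cons_append, List.head?_cons,
              Option.some.injEq] at ha
            subst ha
            exact not_mem_image_snd hα2
          · simp only [List.cons_append, List.head?_cons, Option.some.injEq] at ha
            subst ha
            exact hh c rfl
        · intro a ha
          rcases y.eq_nil_or_concat with rfl | ⟨y', b, rfl⟩
          · rw [List.append_nil, List.getLast?_concat] at ha
            injection ha with ha
            subst ha
            exact not_mem_image_fst hα1
          · rw [List.concat_eq_append] at ha hl
            rw [show (x ++ [α]) ++ (y' ++ [b]) = (x ++ [α] ++ y') ++ [b] by simp,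
              List.getLast?_concat] at ha
            injection ha with ha
            subst ha
            exact hl b (by rw [show x ++ (y' ++ [b]) = (x ++ y') ++ [b] by simp,
              List.getLast?_concat])
      · refine ⟨x ++ [ψ], ψ' :: y, ⟨?_, ?_⟩, Or.inl (by simp)⟩
        · intro a ha
          rcases x with _ | ⟨c, x⟩
          · simp only [List.nil_append, List.cons_append, List.head?_cons,
              Option.some.injEq] at ha
            subst ha
            exact hdisj ψ (Finset.mem_image.mpr ⟨(ψ, ψ'), hoc, rfl⟩)
          · simp only [List.cons_append, List.head?_cons, Option.some.injEq] at ha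
            subst ha
            exact hh c rfl
        · intro a ha
          rcases y.eq_nil_or_concat with rfl | ⟨y', b, rfl⟩
          · rw [show (x ++ [ψ]) ++ [ψ'] = (x ++ [ψ]) ++ [ψ'] from rfl,
              List.getLast?_concat] at ha
            injection ha with ha
            subst ha
            intro hmem
            exact hdisj ψ' hmem (Finset.mem_image.mpr ⟨(ψ, ψ'), hoc, rfl⟩)
          · rw [List.concat_eq_append] at ha hl
            rw [show (x ++ [ψ]) ++ ψ' :: (y' ++ [b]) = (x ++ [ψ] ++ ψ' :: y') ++ [b] by simp,
              List.getLast?_concat] at ha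
            injection ha with ha
            subst ha
            exact hl b (by rw [show x ++ (y' ++ [b]) = (x ++ y') ++ [b] by simp,
              List.getLast?_concat])
    · exfalso
      have hmem : Symbol.nonterminal () ∈ ((x ++ y).map Symbol.terminal : List (Symbol L Unit)) := by
        rw [← hu, hbc]; simp
      simp at hmem
end

section
/- Let L be a finite label set and oc ⊆ L × L, and let G_oc be the well-formed-string grammar over (L, oc). Assume that the sets of openers and closers are disjoint. Then every nonempty word w generated by G_oc satisfies exactly one of the following, and in each case the decomposition is unique: (i) the first letter of w is a neutral label α and w = α·v for a word v generated by G_oc; or (ii) the first letter of w is an opener ψ, the last letter of w is a closer ψ' with (ψ, ψ') ∈ oc, and w = ψ·v·ψ' for a word v generated by G_oc. -/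
open ContextFreeGrammar


lemma wf_rules_char {L : Type} [Fintype L] [DecidableEq L] (oc : Finset (L × L))
    (r : ContextFreeRule L Unit) (hr : r ∈ (wfGrammar L oc).rules) :
      r = ⟨(), []⟩ ∨
      (∃ α : L, ((∀ β, (α, β) ∉ oc) ∧ (∀ β, (β, α) ∉ oc)) ∧
        r = ⟨(), [Symbol.terminal α, Symbol.nonterminal ()]⟩) ∨
      (∃ p : L × L, p ∈ oc ∧
        r = ⟨(), [Symbol.terminal p.1, Symbol.nonterminal (), Symbol.terminal p.2]⟩) := by
  replace hr := Finset.mem_union.mp hr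
  simp only [Finset.mem_union, Finset.mem_image, Finset.mem_filter,
    Finset.mem_singleton, Finset.mem_univ, true_and] at hr
  rcases hr with (h | ⟨α, hα, h⟩) | ⟨p1, hp, h⟩
  · exact Or.inl h
  · exact Or.inr (Or.inl ⟨α, hα, h.symm⟩)
  · exact Or.inr (Or.inr ⟨p1, hp, h.symm⟩)

/-- derivation from an all-terminal string is trivial -/
lemma wf_terminal_derives {L : Type} [Fintype L] [DecidableEq L] {oc : Finset (L × L)}
    {y : List L} {s : List (Symbol L Unit)}
    (h : (wfGrammar L oc).Derives (List.map Symbol.terminal y) s) :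
    s = List.map Symbol.terminal y := by
  rcases h.eq_or_head with h | ⟨x, ⟨r, _, hrw⟩, _⟩
  · exact h.symm
  · exfalso
    obtain ⟨p, q, hu, -⟩ := hrw.exists_parts
    have : Symbol.nonterminal r.input ∈ List.map (Symbol.terminal (N := (wfGrammar L oc).NT)) y := by
      rw [hu]; simp
    simp at this

lemma split_aux {α : Type} {x : α} :
    ∀ (A p : List α) {B q : List α}, x ∉ A → x ∉ p →
    A ++ x :: B = p ++ x :: q → A = p ∧ B = q
  | [], [], _, _, _, _, h => by simpa using h
  | [], b :: p', _, _, _, hp, h => by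
      simp at h
      exact absurd (h.1 ▸ List.mem_cons_self) hp
  | a :: A', [], _, _, hA, _, h => by
      simp at h
      exact absurd (h.1 ▸ List.mem_cons_self) hA
  | a :: A', b :: p', _, _, hA, hp, h => by
      simp at h
      obtain ⟨rfl, h2⟩ := h
      have := split_aux A' p' (fun hx => hA (List.mem_cons_of_mem _ hx))
        (fun hx => hp (List.mem_cons_of_mem _ hx)) h2
      exact ⟨by rw [this.1], this.2⟩

lemma split_at_nt {α : Type} {x : α} {A p B q : List α}
    (hA : x ∉ A) (hB : x ∉ B) (h : A ++ x :: B = p ++ x :: q) : A = p ∧ B = q := by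
  classical
  have hcnt := congrArg (List.count x) h
  simp [List.count_append, List.count_cons, List.count_eq_zero_of_not_mem hA,
    List.count_eq_zero_of_not_mem hB] at hcnt
  have hp : x ∉ p := List.count_eq_zero.mp (by omega)
  exact split_aux A p hA hp h

lemma wf_key {L : Type} [Fintype L] [DecidableEq L] {oc : Finset (L × L)}
    {s : List (Symbol L Unit)} {w : List L}
    (hder : (wfGrammar L oc).Derives s (List.map Symbol.terminal w)) :
    ∀ a b : List L,
      s = List.map Symbol.terminal a ++ Symbol.nonterminal () :: List.map Symbol.terminal b →
      ∃ v, w = a ++ v ++ b ∧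
        (wfGrammar L oc).Derives [Symbol.nonterminal ()] (List.map Symbol.terminal v) := by
  induction hder using Relation.ReflTransGen.head_induction_on with
  | refl =>
    intro a b hab
    exfalso
    have : (Symbol.nonterminal () : Symbol L Unit) ∈ List.map (Symbol.terminal (N := Unit)) w := by
      exact (congrArg (fun l => (Symbol.nonterminal () : Symbol L Unit) ∈ l) hab).mpr
        (List.mem_append_right _ List.mem_cons_self)
    obtain ⟨_, -, h⟩ := List.mem_map.mp this
    cases h
  | head hprod hder ih =>
    rename_i s x
    intro a b hab
    obtain ⟨r, hr, hrw⟩ := hprod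
    obtain ⟨p, q, hu, hx⟩ := hrw.exists_parts
    have hin : Symbol.nonterminal r.input = Symbol.nonterminal (T := L) () := by
      cases r.input; rfl
    rw [hab, hin] at hu
    have hsplit := split_at_nt (A := List.map Symbol.terminal a)
      (B := List.map Symbol.terminal b)
      (x := Symbol.nonterminal (T := L) (N := (wfGrammar L oc).NT) ())
      (p := p) (q := q) (by simp) (by simp) (hu.trans (List.append_assoc _ _ _))
    obtain ⟨hp, hq⟩ := hsplit
    rcases wf_rules_char oc r hr with rfl | ⟨α, hα, rfl⟩ | ⟨⟨ψ, ψ'⟩, hψ, rfl⟩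
    · -- epsilon rule
      have hx' : x = List.map Symbol.terminal (a ++ b) := by
        rw [hx, ← hp, ← hq]; simp
        exact congrArg (· ++ _) (List.append_nil _)
      rw [hx'] at hder
      have := wf_terminal_derives hder
      have hw : w = a ++ b := by
        have := List.map_injective_iff.mpr (fun _ _ h => Symbol.terminal.inj h) this
        exact this
      refine ⟨[], by simp [hw], ?_⟩
      refine (Produces.single ⟨⟨(), []⟩, ?_, ?_⟩)
      · exact Finset.mem_union_left (α := ContextFreeRule L Unit) _ (Finset.mem_union_left _ (Finset.mem_singleton_self _))
      · exact ContextFreeRule.Rewrites.input_output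
    · -- neutral rule
      have hx' : x = List.map Symbol.terminal (a ++ [α]) ++
          Symbol.nonterminal () :: List.map Symbol.terminal b := by
        rw [hx, ← hp, ← hq]; simp
        exact List.append_assoc _ _ _
      obtain ⟨v, hv, hdv⟩ := ih (a ++ [α]) b hx'
      refine ⟨α :: v, by simp [hv], ?_⟩
      refine Produces.trans_derives (v := [Symbol.terminal α, Symbol.nonterminal ()])
        ⟨⟨(), [Symbol.terminal α, Symbol.nonterminal ()]⟩, ?_, ?_⟩ ?_
      · exact Finset.mem_union_left (α := ContextFreeRule L Unit) _ (Finset.mem_union_right _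
          (Finset.mem_image_of_mem _ (Finset.mem_filter.mpr ⟨Finset.mem_univ _, hα⟩)))
      · exact ContextFreeRule.Rewrites.input_output
      · have := hdv.append_left [Symbol.terminal α]
        simpa using this
    · -- pair rule
      have hx' : x = List.map Symbol.terminal (a ++ [ψ]) ++
          Symbol.nonterminal () :: List.map Symbol.terminal (ψ' :: b) := by
        rw [hx, ← hp, ← hq]; simp
        exact List.append_assoc _ _ _
      obtain ⟨v, hv, hdv⟩ := ih (a ++ [ψ]) (ψ' :: b) hx'
      refine ⟨ψ :: (v ++ [ψ']), by simp [hv], ?_⟩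
      refine Produces.trans_derives
        (v := [Symbol.terminal ψ, Symbol.nonterminal (), Symbol.terminal ψ'])
        ⟨⟨(), [Symbol.terminal ψ, Symbol.nonterminal (), Symbol.terminal ψ']⟩, ?_, ?_⟩ ?_
      · exact Finset.mem_union_right (α := ContextFreeRule L Unit) _ (Finset.mem_image_of_mem _ hψ)
      · exact ContextFreeRule.Rewrites.input_output
      · have := (hdv.append_right [Symbol.terminal ψ']).append_left [Symbol.terminal ψ]
        simpa using this

/-- Unique top-level decomposition of nonempty well-formed strings (Claim A.1): if the openers
and closers are disjoint, every nonempty word generated by `G_oc` satisfies exactly one of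
(i) it starts with a neutral label followed by a generated word, or
(ii) it is an opening label, a generated word, and a matching closing label;
and in each case the decomposition is unique. -/
theorem stmt_7 {L : Type} [Fintype L] [DecidableEq L] (oc : Finset (L × L))
    (hdisj : Disjoint (oc.image Prod.fst) (oc.image Prod.snd))
    (w : List L) (hw : w ∈ (wfGrammar L oc).language) (hne : w ≠ []) :
    ((∃ α v, ((∀ β, (α, β) ∉ oc) ∧ (∀ β, (β, α) ∉ oc)) ∧ w = α :: v ∧
        v ∈ (wfGrammar L oc).language) ∨
      (∃ ψ ψ' v, (ψ, ψ') ∈ oc ∧ w = ψ :: (v ++ [ψ']) ∧ v ∈ (wfGrammar L oc).language)) ∧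
    ¬((∃ α v, ((∀ β, (α, β) ∉ oc) ∧ (∀ β, (β, α) ∉ oc)) ∧ w = α :: v ∧
        v ∈ (wfGrammar L oc).language) ∧
      (∃ ψ ψ' v, (ψ, ψ') ∈ oc ∧ w = ψ :: (v ++ [ψ']) ∧ v ∈ (wfGrammar L oc).language)) ∧
    ((∃ α v, ((∀ β, (α, β) ∉ oc) ∧ (∀ β, (β, α) ∉ oc)) ∧ w = α :: v ∧
        v ∈ (wfGrammar L oc).language) →
      ∃! d : L × List L, ((∀ β, (d.1, β) ∉ oc) ∧ (∀ β, (β, d.1) ∉ oc)) ∧ w = d.1 :: d.2 ∧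
        d.2 ∈ (wfGrammar L oc).language) ∧
    ((∃ ψ ψ' v, (ψ, ψ') ∈ oc ∧ w = ψ :: (v ++ [ψ']) ∧ v ∈ (wfGrammar L oc).language) →
      ∃! d : L × List L × L, (d.1, d.2.2) ∈ oc ∧ w = d.1 :: (d.2.1 ++ [d.2.2]) ∧
        d.2.1 ∈ (wfGrammar L oc).language) := by
  refine ⟨?_, ?_, ?_, ?_⟩
  · -- existence
    rw [mem_language_iff] at hw
    rcases hw.eq_or_head with h | ⟨x, ⟨r, hr, hrw⟩, hder⟩
    · exfalso
      cases w with
      | nil => exact hne rfl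
      | cons c cs => simp at h
    · obtain ⟨p, q, hu, hx⟩ := hrw.exists_parts
      have hpq : p = [] ∧ q = [] := by
        have := congrArg List.length hu
        simp at this
        constructor <;> [exact List.eq_nil_of_length_eq_zero (by omega);
          exact List.eq_nil_of_length_eq_zero (by omega)]
      obtain ⟨rfl, rfl⟩ := hpq
      have hxout : x = r.output := by rw [hx]; simp
      rcases wf_rules_char oc r hr with rfl | ⟨α, hα, rfl⟩ | ⟨⟨ψ, ψ'⟩, hψ, rfl⟩
      · exfalso
        rw [hxout] at hder
        have h0 := wf_terminal_derives (y := ([] : List L)) (by exact hder)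
        simp at h0
        exact hne (List.map_eq_nil_iff.mp h0)
      · rw [hxout] at hder
        obtain ⟨v, hv, hdv⟩ := wf_key hder [α] [] (by simp)
        exact Or.inl ⟨α, v, hα, by simpa using hv, hdv⟩
      · rw [hxout] at hder
        obtain ⟨v, hv, hdv⟩ := wf_key hder [ψ] [ψ'] (by simp)
        exact Or.inr ⟨ψ, ψ', v, hψ, by simpa using hv, hdv⟩
  · -- mutual exclusion
    rintro ⟨⟨α, v, hα, hav, -⟩, ⟨ψ, ψ', u, hψ, huv, -⟩⟩
    rw [hav] at huv
    have hαψ : α = ψ := (List.cons.inj huv).1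
    exact hα.1 ψ' (hαψ ▸ hψ)
  · -- uniqueness (i)
    rintro ⟨α, v, hα, hav, hv⟩
    refine ⟨(α, v), ⟨hα, hav, hv⟩, ?_⟩
    rintro ⟨α', v'⟩ ⟨-, hav', -⟩
    rw [hav] at hav'
    obtain ⟨rfl, rfl⟩ := List.cons.inj hav'
    rfl
  · -- uniqueness (ii)
    rintro ⟨ψ, ψ', v, hψ, hv, hvl⟩
    refine ⟨(ψ, v, ψ'), ⟨hψ, hv, hvl⟩, ?_⟩
    rintro ⟨ψ₂, v₂, ψ₂'⟩ ⟨-, hv₂, -⟩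
    rw [hv] at hv₂
    obtain ⟨rfl, htl⟩ := List.cons.inj hv₂
    obtain ⟨rfl, h2⟩ := List.append_inj' htl rfl
    simp at h2
    subst h2
    rfl
end
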